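/- In the F-basis, the pseudo-diagonalized B operator of the spin-1/2 XXZ chain for n = 2 sites equals: F₁₂ B₁₂(λ) F₁₂^{-1} = c₀₁ σ₁⁻ ⊗ diag(b₀₂, b₂₁^{-1}) + c₀₂ diag(b₀₁, b₁₂^{-1}) ⊗ σ₂⁻, where b₀ᵢ = b(λ-ξᵢ), bᵢⱼ = b(ξᵢ-ξⱼ), c₀ᵢ = c(λ-ξᵢ). -/

import Mathlib

open Complex Matrix Kronecker Topology Filter

noncomputable def bC (η u : ℂ) : ℂ := Complex.sinh u / Complex.sinh (u + η)
noncomputable def cC (η u : ℂ) : ℂ := Complex.sinh η / Complex.sinh (u + η)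

noncomputable def Rsym (η u : ℂ) : Matrix (Fin 2 × Fin 2) (Fin 2 × Fin 2) ℂ :=
  fun p q =>
    if p = q then (if p.1 = p.2 then 1 else bC η u)
    else if p.1 = q.2 ∧ p.2 = q.1 ∧ p.1 ≠ p.2 then cC η u else 0

noncomputable def Rplus (η u : ℂ) : Matrix (Fin 2 × Fin 2) (Fin 2 × Fin 2) ℂ :=
  fun p q =>
    if p = q then (if p.1 = p.2 then 1 else bC η u)
    else if p = ((0 : Fin 2), (1 : Fin 2)) ∧ q = (1, 0) then Complex.exp (-u) * cC η u
    else if p = ((1 : Fin 2), (0 : Fin 2)) ∧ q = (0, 1) then Complex.exp u * cC η u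
    else 0

noncomputable def Rminus (η u : ℂ) : Matrix (Fin 2 × Fin 2) (Fin 2 × Fin 2) ℂ :=
  fun p q =>
    if p = q then (if p.1 = p.2 then 1 else bC η u)
    else if p = ((0 : Fin 2), (1 : Fin 2)) ∧ q = (1, 0) then Complex.exp u * cC η u
    else if p = ((1 : Fin 2), (0 : Fin 2)) ∧ q = (0, 1) then Complex.exp (-u) * cC η u
    else 0

def flipMat : Matrix (Fin 2 × Fin 2) (Fin 2 × Fin 2) ℂ :=
  fun p q => if p.1 = q.2 ∧ p.2 = q.1 then 1 else 0

noncomputable def Uplus (q : ℂ) : Matrix (Fin 2 × Fin 2) (Fin 2 × Fin 2) ℂ :=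
  fun p r =>
    if p = ((0 : Fin 2), (1 : Fin 2)) ∧ r = (0, 1) then q⁻¹
    else if p = ((0 : Fin 2), (1 : Fin 2)) ∧ r = (1, 0) then -1
    else if p = ((1 : Fin 2), (0 : Fin 2)) ∧ r = (0, 1) then -1
    else if p = ((1 : Fin 2), (0 : Fin 2)) ∧ r = (1, 0) then q
    else 0

noncomputable def embed {n : ℕ} (a b : Fin n) (M : Matrix (Fin 2 × Fin 2) (Fin 2 × Fin 2) ℂ) :
    Matrix (Fin n → Fin 2) (Fin n → Fin 2) ℂ :=
  fun f g => M (f a, f b) (g a, g b) *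
    ∏ i ∈ Finset.univ.filter (fun i => i ≠ a ∧ i ≠ b), (if f i = g i then (1 : ℂ) else 0)

noncomputable def monodromy (η lam : ℂ) {n : ℕ} (ξ : Fin n → ℂ) :
    Matrix (Fin (n + 1) → Fin 2) (Fin (n + 1) → Fin 2) ℂ :=
  (((List.finRange n).reverse).map
    (fun j => embed (0 : Fin (n + 1)) j.succ (Rsym η (lam - ξ j)))).prod

/-- The lowering operator `σ⁻ = [[0,0],[1,0]]`. -/
def sigmaMinus : Matrix (Fin 2) (Fin 2) ℂ := fun i j => if i = 1 ∧ j = 0 then 1 else 0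

/-- The two-site F-matrix `F₁₂ = e₁^{11} + e₁^{22} R₁₂(ξ₁-ξ₂)` on `ℂ²⊗ℂ²`. -/
noncomputable def F12 (η xi1 xi2 : ℂ) : Matrix (Fin 2 × Fin 2) (Fin 2 × Fin 2) ℂ :=
  (Matrix.of fun p q : Fin 2 × Fin 2 => if p = q ∧ p.1 = 0 then (1 : ℂ) else 0)
    + (Matrix.of fun p q : Fin 2 × Fin 2 => if p = q ∧ p.1 = 1 then (1 : ℂ) else 0) *
        Rsym η (xi1 - xi2)

/-- The `B`-operator (upper-right block w.r.t. factor 0) of the two-site monodromy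
matrix `T₀(λ) = R₀₂(λ-ξ₂)R₀₁(λ-ξ₁)`, as a matrix on the quantum space `ℂ²⊗ℂ²`. -/
noncomputable def B12 (η lam xi1 xi2 : ℂ) :
    Matrix (Fin 2 × Fin 2) (Fin 2 × Fin 2) ℂ :=
  fun p q => monodromy η lam ![xi1, xi2] ![0, p.1, p.2] ![1, q.1, q.2]

def e3 : Fin 2 × Fin 2 × Fin 2 ≃ (Fin 3 → Fin 2) where
  toFun x := ![x.1, x.2.1, x.2.2]
  invFun g := (g 0, g 1, g 2)
  left_inv := by decide
  right_inv := by decide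

lemma B12_eq (η lam xi1 xi2 : ℂ) : B12 η lam xi1 xi2 = fun p q =>
    if p = ((0 : Fin 2), (1 : Fin 2)) ∧ q = (0, 0) then cC η (lam - xi2) * bC η (lam - xi1)
    else if p = ((1 : Fin 2), (0 : Fin 2)) ∧ q = (0, 0) then cC η (lam - xi1)
    else if p = ((1 : Fin 2), (1 : Fin 2)) ∧ q = (0, 1) then cC η (lam - xi1) * bC η (lam - xi2)
    else if p = ((1 : Fin 2), (1 : Fin 2)) ∧ q = (1, 0) then cC η (lam - xi2)
    else 0 := by
  have hl : List.finRange 2 = [0, 1] := by decide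
  have hfil1 : (Finset.univ.filter (fun i : Fin 3 => i ≠ 0 ∧ i ≠ Fin.succ 1)) = {1} := by decide
  have hfil2 : (Finset.univ.filter (fun i : Fin 3 => i ≠ 0 ∧ i ≠ Fin.succ 0)) = {2} := by decide
  funext p q
  obtain ⟨p1, p2⟩ := p
  obtain ⟨q1, q2⟩ := q
  simp only [B12, monodromy, hl, List.reverse_cons, List.reverse_nil, List.nil_append,
    List.cons_append, List.map_cons, List.map_nil, List.prod_cons, List.prod_nil, mul_one,
    Matrix.mul_apply]
  simp only [embed, hfil1, hfil2, Finset.prod_singleton]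
  rw [← Equiv.sum_comp e3]
  simp only [Fintype.sum_prod_type, Fin.sum_univ_two, e3, Equiv.coe_fn_mk]
  simp only [Rsym, Matrix.cons_val_zero, Matrix.cons_val_one, Matrix.head_cons,
    Matrix.cons_val_succ]
  fin_cases p1 <;> fin_cases p2 <;> fin_cases q1 <;> fin_cases q2 <;>
    simp (config := { decide := true }) <;> ring

lemma F12_eq (η xi1 xi2 : ℂ) : F12 η xi1 xi2 = fun p q =>
    if p = q then (if p = ((1 : Fin 2), (0 : Fin 2)) then bC η (xi1 - xi2) else 1)
    else if p = ((1 : Fin 2), (0 : Fin 2)) ∧ q = (0, 1) then cC η (xi1 - xi2) else 0 := by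
  funext p q
  obtain ⟨p1, p2⟩ := p
  obtain ⟨q1, q2⟩ := q
  simp only [F12, Matrix.add_apply, Matrix.mul_apply, Fintype.sum_prod_type, Fin.sum_univ_two,
    Matrix.of_apply, Rsym]
  fin_cases p1 <;> fin_cases p2 <;> fin_cases q1 <;> fin_cases q2 <;>
    simp (config := { decide := true })

noncomputable def invF (η xi1 xi2 : ℂ) : Matrix (Fin 2 × Fin 2) (Fin 2 × Fin 2) ℂ :=
  fun p q =>
    if p = q then (if p = ((1 : Fin 2), (0 : Fin 2)) then (bC η (xi1 - xi2))⁻¹ else 1)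
    else if p = ((1 : Fin 2), (0 : Fin 2)) ∧ q = (0, 1) then
      -(cC η (xi1 - xi2) * (bC η (xi1 - xi2))⁻¹) else 0

lemma F12_inv (η xi1 xi2 : ℂ) (h12 : Complex.sinh (xi1 - xi2 + η) ≠ 0)
    (h0 : Complex.sinh (xi1 - xi2) ≠ 0) :
    (F12 η xi1 xi2)⁻¹ = invF η xi1 xi2 := by
  have hb : bC η (xi1 - xi2) ≠ 0 := div_ne_zero h0 h12
  apply Matrix.inv_eq_right_inv
  rw [F12_eq]
  funext p q
  obtain ⟨p1, p2⟩ := p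
  obtain ⟨q1, q2⟩ := q
  erw [Matrix.mul_apply]
  simp only [Fintype.sum_prod_type, Fin.sum_univ_two, invF, Matrix.one_apply]
  fin_cases p1 <;> fin_cases p2 <;> fin_cases q1 <;> fin_cases q2 <;>
    simp (config := { decide := true }) <;> field_simp <;> try ring

lemma key1 (η lam xi1 xi2 : ℂ) :
    Complex.sinh η * Complex.sinh (lam - xi1)
      + Complex.sinh (xi1 - xi2) * Complex.sinh (lam - xi2 + η)
      = Complex.sinh (lam - xi2) * Complex.sinh (xi1 - xi2 + η) := by
  simp only [Complex.sinh_add, Complex.sinh_sub, Complex.cosh_add, Complex.cosh_sub]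
  linear_combination (-(Complex.sinh η *
    (Complex.sinh lam * Complex.cosh xi1 - Complex.cosh lam * Complex.sinh xi1))) *
      (Complex.cosh_sq_sub_sinh_sq xi2)

lemma key2 (η lam xi1 xi2 : ℂ) :
    Complex.sinh (lam - xi2) * Complex.sinh (xi1 - xi2)
      - Complex.sinh η * Complex.sinh (lam - xi1 + η)
      + Complex.sinh (η - (xi1 - xi2)) * Complex.sinh (lam - xi2 + η) = 0 := by
  simp only [Complex.sinh_add, Complex.sinh_sub, Complex.cosh_add, Complex.cosh_sub]
  linear_combination
    (-((Complex.sinh lam * Complex.cosh xi2 - Complex.cosh lam * Complex.sinh xi2) *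
        (Complex.sinh xi1 * Complex.cosh xi2 - Complex.cosh xi1 * Complex.sinh xi2))) *
      (Complex.cosh_sq_sub_sinh_sq η)
    + (Complex.sinh η * Complex.cosh η *
        (Complex.sinh lam * Complex.cosh xi1 - Complex.cosh lam * Complex.sinh xi1)
      + Complex.sinh η * Complex.sinh η *
        (Complex.cosh lam * Complex.cosh xi1 - Complex.sinh lam * Complex.sinh xi1)) *
      (Complex.cosh_sq_sub_sinh_sq xi2)


set_option maxHeartbeats 2000000 in
/-- Pseudo-diagonalization of the `B` operator for `n = 2` sites:
`F₁₂ B₁₂(λ) F₁₂⁻¹ = c₀₁ σ₁⁻ ⊗ diag(b₀₂, b₂₁⁻¹) + c₀₂ diag(b₀₁, b₁₂⁻¹) ⊗ σ₂⁻`. -/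
theorem B_pseudo_diagonal_two_sites (η lam xi1 xi2 : ℂ)
    (h1 : Complex.sinh (lam - xi1 + η) ≠ 0)
    (h2 : Complex.sinh (lam - xi2 + η) ≠ 0)
    (h12 : Complex.sinh (xi1 - xi2 + η) ≠ 0)
    (h21 : Complex.sinh (xi2 - xi1 + η) ≠ 0)
    (h0 : Complex.sinh (xi1 - xi2) ≠ 0) :
    F12 η xi1 xi2 * B12 η lam xi1 xi2 * (F12 η xi1 xi2)⁻¹
      = cC η (lam - xi1) •
          (sigmaMinus ⊗ₖ Matrix.diagonal ![bC η (lam - xi2), (bC η (xi2 - xi1))⁻¹])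
        + cC η (lam - xi2) •
          (Matrix.diagonal ![bC η (lam - xi1), (bC η (xi1 - xi2))⁻¹] ⊗ₖ sigmaMinus) := by
  have h0' : Complex.sinh (xi2 - xi1) ≠ 0 := by
    rw [show xi2 - xi1 = -(xi1 - xi2) by ring, Complex.sinh_neg]
    simpa using h0
  rw [F12_inv η xi1 xi2 h12 h0]
  funext p q
  simp only [Matrix.mul_apply]
  rw [F12_eq, B12_eq]
  obtain ⟨p1, p2⟩ := p
  obtain ⟨q1, q2⟩ := q
  fin_cases p1 <;> fin_cases p2 <;> fin_cases q1 <;> fin_cases q2 <;>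
    (simp (config := { decide := true }) only [Matrix.mul_apply, Fintype.sum_prod_type,
        Fin.sum_univ_two, invF, Matrix.add_apply, Matrix.smul_apply, Matrix.kroneckerMap_apply,
        Matrix.diagonal_apply, sigmaMinus, smul_eq_mul, if_true, if_false, Matrix.cons_val_zero,
        Matrix.cons_val_one, Matrix.head_cons, one_mul, mul_one, zero_mul, mul_zero, add_zero,
        zero_add, and_self, and_false, false_and, ite_true, ite_false, Fin.zero_eta, Fin.mk_one]
     all_goals simp only [bC, cC]
     all_goals field_simp
     all_goals try ring)
  · linear_combination (Complex.sinh η) * key1 η lam xi1 xi2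
  · rw [show -xi2 + xi1 = xi1 - xi2 by ring, show xi2 - xi1 + η = η - (xi1 - xi2) by ring,
      show xi2 - xi1 = -(xi1 - xi2) by ring, Complex.sinh_neg]
    linear_combination (-(Complex.sinh η * Complex.sinh (xi1 - xi2))) * key2 η lam xi1 xi2
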